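/- No combinatorial rectangle r_1(Y) ∧ r_2(Z) that implies the cardinality constraint C_n^k can have among its models two assignments (a_i, b_i) and (a_j, b_j) with i < j, where a_i sets exactly i variables of Y to true and b_i sets exactly k−i variables of Z to true. -/

import Mathlib

/-- A predicate on assignments depends only on the variables in `S` if its
value is unchanged by modifications outside `S`. -/
def AssignDependsOn {V : Type} (r : (V → Bool) → Prop) (S : Set V) : Prop :=
  ∀ a b : V → Bool, (∀ v ∈ S, a v = b v) → (r a ↔ r b)

/-- The cardinality constraint C_n^k: at most k of the n variables are true. -/
def CardLE (n k : ℕ) (a : Fin n → Bool) : Prop :=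
  (Finset.univ.filter fun i => a i = true).card ≤ k

/-- No combinatorial rectangle r1(Y) ∧ r2(Z) implying C_n^k can have among
its models both the assignment (a_i, b_i) (exactly i true variables in Y
and k−i true variables in Z) and (a_j, b_j) for i < j. -/
theorem stmt7 (n k i j : ℕ) (hij : i < j)
    (Y : Finset (Fin n))
    (r1 r2 : (Fin n → Bool) → Prop)
    (h1 : AssignDependsOn r1 ↑Y) (h2 : AssignDependsOn r2 (↑Y : Set (Fin n))ᶜ)
    (himp : ∀ a, r1 a ∧ r2 a → CardLE n k a)
    (ci cj : Fin n → Bool)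
    (hci1 : (Y.filter fun v => ci v = true).card = i)
    (hci2 : (Yᶜ.filter fun v => ci v = true).card = k - i)
    (hcj1 : (Y.filter fun v => cj v = true).card = j)
    (hcj2 : (Yᶜ.filter fun v => cj v = true).card = k - j) :
    ¬ ((r1 ci ∧ r2 ci) ∧ (r1 cj ∧ r2 cj)) := by
  rintro ⟨⟨h1i, h2i⟩, ⟨h1j, h2j⟩⟩
  -- split helper
  have split : ∀ a : Fin n → Bool,
      (Finset.univ.filter fun v => a v = true).card
        = (Y.filter fun v => a v = true).card + (Yᶜ.filter fun v => a v = true).card := by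
    intro a
    rw [← Finset.card_union_of_disjoint (Finset.disjoint_filter_filter disjoint_compl_right),
      ← Finset.filter_union, Finset.union_compl]
  -- i ≤ k
  have hik : i ≤ k := by
    have := himp ci ⟨h1i, h2i⟩
    unfold CardLE at this
    rw [split ci, hci1] at this
    omega
  -- mixed assignment
  set c : Fin n → Bool := fun v => if v ∈ Y then cj v else ci v with hc
  have hr1 : r1 c := by
    refine (h1 c cj ?_).mpr h1j
    intro v hv
    simp only [Finset.mem_coe] at hv
    simp [hc, hv]
  have hr2 : r2 c := by
    refine (h2 c ci ?_).mpr h2i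
    intro v hv
    simp only [Set.mem_compl_iff, Finset.mem_coe] at hv
    simp [hc, hv]
  have hcard := himp c ⟨hr1, hr2⟩
  unfold CardLE at hcard
  rw [split c] at hcard
  have e1 : (Y.filter fun v => c v = true).card = j := by
    rw [← hcj1]
    congr 1
    apply Finset.filter_congr
    intro v hv
    simp [hc, hv]
  have e2 : (Yᶜ.filter fun v => c v = true).card = k - i := by
    rw [← hci2]
    congr 1
    apply Finset.filter_congr
    intro v hv
    simp only [Finset.mem_compl] at hv
    simp [hc, hv]
  rw [e1, e2] at hcard
  omega
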